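/- arXiv:1609.08279 — 6 statements merged into one kernel-verified Lean document; each statement's English description precedes it below -/
import Mathlib

section
/- Let k be a number field and μ a positive integer. If f : k → k is a ℚ-linear map such that f(a^μ · x) = a^μ · f(x) for all a, x ∈ k, then there exists c ∈ k such that f(x) = c · x for all x ∈ k. -/
open Polynomial Finset

theorem stmt_2 (k : Type*) [Field k] [NumberField k] (μ : ℕ) (hμ : 0 < μ)
    (f : k →ₗ[ℚ] k) (hf : ∀ a x : k, f (a ^ μ * x) = a ^ μ * f x) :
    ∃ c : k, ∀ x : k, f x = c * x := by
  have key : ∀ a x : k, f (a * x) = a * f x := by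
    intro a x
    set c : ℕ → k := fun i => (μ.choose i : k) * (f (a ^ (μ - i) * x) - a ^ (μ - i) * f x)
      with hc
    set p : Polynomial k := ∑ i ∈ Finset.range (μ + 1), Polynomial.C (c i) * Polynomial.X ^ i
      with hp
    have hrat : ∀ (r : ℚ) (y : k), f ((r : k) * y) = (r : k) * f y := by
      intro r y
      have : (r : k) * y = r • y := by rw [Rat.smul_def]
      rw [this, map_smul, Rat.smul_def]
    have heval : ∀ q : ℚ, p.eval (q : k) = 0 := by
      intro q
      have hexp : ((q : k) + a) ^ μ = ∑ i ∈ Finset.range (μ + 1),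
          (q : k) ^ i * (a ^ (μ - i) * (μ.choose i : k)) := by
        rw [add_pow]
        exact Finset.sum_congr rfl fun i _ => by ring
      have h0 : f (((q : k) + a) ^ μ * x) = ((q : k) + a) ^ μ * f x := hf _ x
      have hL : f (((q : k) + a) ^ μ * x)
          = ∑ i ∈ Finset.range (μ + 1), (q : k) ^ i * ((μ.choose i : k) * f (a ^ (μ - i) * x)) := by
        rw [hexp, Finset.sum_mul, map_sum]
        apply Finset.sum_congr rfl
        intro i _
        have e1 : (q : k) ^ i * (a ^ (μ - i) * (μ.choose i : k)) * x
            = ((q ^ i * (μ.choose i : ℚ) : ℚ) : k) * (a ^ (μ - i) * x) := by push_cast; ring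
        rw [e1, hrat]
        push_cast; ring
      have hR : ((q : k) + a) ^ μ * f x
          = ∑ i ∈ Finset.range (μ + 1), (q : k) ^ i * ((μ.choose i : k) * (a ^ (μ - i) * f x)) := by
        rw [hexp, Finset.sum_mul]
        exact Finset.sum_congr rfl fun i _ => by ring
      have hev : p.eval (q : k) = ∑ i ∈ Finset.range (μ + 1), c i * (q : k) ^ i := by
        rw [hp]; simp [eval_finset_sum]
      rw [hev]
      rw [hL, hR] at h0
      have hsum : ∑ i ∈ Finset.range (μ + 1), c i * (q : k) ^ i
          = (∑ i ∈ Finset.range (μ + 1), (q : k) ^ i * ((μ.choose i : k) * f (a ^ (μ - i) * x)))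
            - ∑ i ∈ Finset.range (μ + 1), (q : k) ^ i * ((μ.choose i : k) * (a ^ (μ - i) * f x)) := by
        rw [← Finset.sum_sub_distrib]
        exact Finset.sum_congr rfl fun i _ => by rw [hc]; ring
      rw [hsum, h0, sub_self]
    have hp0 : p = 0 := by
      apply Polynomial.eq_zero_of_infinite_isRoot
      apply Set.Infinite.mono (s := Set.range (fun q : ℚ => (q : k)))
      · rintro _ ⟨q, rfl⟩
        exact heval q
      · exact Set.infinite_range_of_injective (fun a b h => by exact_mod_cast h)
    have hcoeff : c (μ - 1) = 0 := by
      have h1 : p.coeff (μ - 1) = c (μ - 1) := by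
        rw [hp, Polynomial.finset_sum_coeff, Finset.sum_eq_single (μ - 1)]
        · simp
        · intro b _ hb
          simp [Polynomial.coeff_C_mul, Polynomial.coeff_X_pow, Ne.symm hb]
        · intro h
          exact absurd (Finset.mem_range.2 (by omega)) h
      rw [← h1, hp0, Polynomial.coeff_zero]
    rw [hc] at hcoeff
    simp only at hcoeff
    have hμ1 : μ - (μ - 1) = 1 := by omega
    rw [hμ1, pow_one] at hcoeff
    have hch : (μ.choose (μ - 1) : k) ≠ 0 := by
      have h2 : μ.choose (μ - 1) = μ := by
        rw [Nat.choose_symm hμ, Nat.choose_one_right]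
      rw [h2]
      exact Nat.cast_ne_zero.mpr (by omega)
    rcases mul_eq_zero.1 hcoeff with h | h
    · exact absurd h hch
    · exact sub_eq_zero.1 h
  refine ⟨f 1, fun x => ?_⟩
  calc f x = f (x * 1) := by rw [mul_one]
    _ = x * f 1 := key x 1
    _ = f 1 * x := mul_comm _ _
end

section
/- Let k be a number field. For each integer n ≥ 2 let A_n := k[X]/(X^n) and let I_n ⊆ A_n be the ideal generated by the class of X. For a ∈ k^×, let σ_{a,n} : I_n → I_n be the restriction of the k-algebra endomorphism of A_n determined by X ↦ a^{-1}X; let τ_n : I_n → I_n be the restriction of the k-algebra endomorphism of A_n determined by X ↦ X + X² + ⋯ + X^{n-1}; for m ≥ n ≥ 2 let π_{m,n} : I_m → I_n be the restriction of the natural projection A_m → A_n. Suppose (α_n)_{n ≥ 2} is a family of ℚ-linear maps α_n : I_n → I_n satisfying: (i) α_n ∘ σ_{a,n} = σ_{a,n} ∘ α_n for every n ≥ 2 and every a ∈ k^×; (ii) α_n ∘ τ_n = τ_n ∘ α_n for every n ≥ 2; (iii) π_{m,n} ∘ α_m = α_n ∘ π_{m,n} for all m ≥ n ≥ 2. Then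 there exists a single element c ∈ k such that α_n(x) = c·x for every n ≥ 2 and every x ∈ I_n. -/
open Polynomial

noncomputable section

variable (k : Type*) [Field k]

theorem rootPowZero (n : ℕ) : (AdjoinRoot.root (X ^ n : k[X])) ^ n = 0 := by
  have h := AdjoinRoot.eval₂_root (X ^ n : k[X])
  simpa using h

/-- In `A_n = k[X]/(X^n)`: the `k`-algebra endomorphism determined by `X ↦ a⁻¹·X`. -/
def sigmaHom (a : kˣ) (n : ℕ) :
    AdjoinRoot (X ^ n : k[X]) →ₐ[k] AdjoinRoot (X ^ n : k[X]) :=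
  AdjoinRoot.liftAlgHom _ (Algebra.ofId k _) (((a⁻¹ : kˣ) : k) • AdjoinRoot.root _) (by
    rw [Algebra.toRingHom_ofId, ← aeval_def]
    rw [map_pow, aeval_X, _root_.smul_pow, rootPowZero, smul_zero])

/-- In `A_n = k[X]/(X^n)`: the `k`-algebra endomorphism determined by
`X ↦ X + X² + ⋯ + X^(n-1)`. -/
def tauHom (n : ℕ) :
    AdjoinRoot (X ^ n : k[X]) →ₐ[k] AdjoinRoot (X ^ n : k[X]) :=
  AdjoinRoot.liftAlgHom _ (Algebra.ofId k _) (∑ i ∈ Finset.Ico 1 n, AdjoinRoot.root (X ^ n : k[X]) ^ i) (by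
    rw [Algebra.toRingHom_ofId, ← aeval_def]
    rw [map_pow, aeval_X]
    have hdvd : AdjoinRoot.root (X ^ n : k[X]) ∣
        ∑ i ∈ Finset.Ico 1 n, AdjoinRoot.root (X ^ n : k[X]) ^ i :=
      Finset.dvd_sum fun i hi => dvd_pow_self _ (by
        have := (Finset.mem_Ico.mp hi).1; omega)
    have h0 : (AdjoinRoot.root (X ^ n : k[X])) ^ n = 0 := rootPowZero k n
    exact zero_dvd_iff.mp (h0 ▸ pow_dvd_pow_of_dvd hdvd n))

/-- The natural projection `A_m = k[X]/(X^m) → A_n = k[X]/(X^n)` for `n ≤ m`. -/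
def projHom (m n : ℕ) (h : n ≤ m) :
    AdjoinRoot (X ^ m : k[X]) →ₐ[k] AdjoinRoot (X ^ n : k[X]) :=
  AdjoinRoot.liftAlgHom _ (Algebra.ofId k _) (AdjoinRoot.root _) (by
    rw [Algebra.toRingHom_ofId, ← aeval_def]
    rw [map_pow, aeval_X, ← Nat.sub_add_cancel h, pow_add, rootPowZero, mul_zero])

/-- The ideal `I_n ⊆ A_n` generated by the class of `X`. -/
def truncIdeal (n : ℕ) : Ideal (AdjoinRoot (X ^ n : k[X])) :=
  Ideal.span {AdjoinRoot.root _}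

lemma Xpow_ne_zero' (n : ℕ) : (X ^ n : k[X]) ≠ 0 := pow_ne_zero _ X_ne_zero

/-- the basis `1, X, …, X^(n-1)` of `A_n`. -/
def bs (n : ℕ) : Module.Basis (Fin n) k (AdjoinRoot (X ^ n : k[X])) :=
  ((AdjoinRoot.powerBasis (Xpow_ne_zero' k n)).basis).reindex
    (finCongr (by simp [AdjoinRoot.powerBasis]))

lemma bs_apply (n : ℕ) (i : Fin n) :
    bs k n i = AdjoinRoot.root (X ^ n : k[X]) ^ (i : ℕ) := by
  rw [bs, Module.Basis.reindex_apply, PowerBasis.basis_eq_pow]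
  simp

/-- evaluation at 0 -/
def epsHom (n : ℕ) (hn : n ≠ 0) : AdjoinRoot (X ^ n : k[X]) →ₐ[k] k :=
  AdjoinRoot.liftAlgHom _ (Algebra.ofId k _) 0 (by
    rw [Algebra.toRingHom_ofId, ← aeval_def]
    simp [zero_pow hn])

lemma epsHom_root (n : ℕ) (hn : n ≠ 0) : epsHom k n hn (AdjoinRoot.root _) = 0 := by
  apply AdjoinRoot.liftAlgHom_root

lemma epsHom_eq_repr (n : ℕ) (hn : n ≠ 0) (z : AdjoinRoot (X ^ n : k[X])) :
    epsHom k n hn z = (bs k n).repr z ⟨0, Nat.pos_of_ne_zero hn⟩ := by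
  conv_lhs => rw [← (bs k n).sum_repr z]
  rw [map_sum]
  rw [Finset.sum_eq_single (⟨0, Nat.pos_of_ne_zero hn⟩ : Fin n)]
  · simp [bs_apply]
  · intro i _ hi
    rw [map_smul, bs_apply, map_pow, epsHom_root k n hn, zero_pow, smul_zero]
    simpa [Fin.ext_iff] using hi
  · simp

lemma mem_truncIdeal_repr_zero (n : ℕ) (hn : n ≠ 0) (z : AdjoinRoot (X ^ n : k[X]))
    (hz : z ∈ truncIdeal k n) : (bs k n).repr z ⟨0, Nat.pos_of_ne_zero hn⟩ = 0 := by
  rw [← epsHom_eq_repr k n hn]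
  obtain ⟨w, hw⟩ := Ideal.mem_span_singleton'.mp hz
  rw [← hw, map_mul, epsHom_root k n hn, mul_zero]

lemma smul_pow_mem (n : ℕ) (x : k) (i : ℕ) (hi : i ≠ 0) :
    x • (AdjoinRoot.root (X ^ n : k[X])) ^ i ∈ truncIdeal k n := by
  rw [truncIdeal, Ideal.mem_span_singleton, Algebra.smul_def]
  exact Dvd.dvd.mul_left (dvd_pow_self _ hi) _

lemma repr_sum (n : ℕ) (c : Fin n → k) (j : Fin n) :
    (bs k n).repr (∑ i : Fin n, c i • AdjoinRoot.root (X ^ n : k[X]) ^ (i : ℕ)) j = c j := by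
  have : ∀ i : Fin n, c i • AdjoinRoot.root (X ^ n : k[X]) ^ (i : ℕ) = c i • bs k n i := by
    intro i; rw [bs_apply]
  simp_rw [this]
  rw [Module.Basis.repr_sum_self]

lemma sigmaHom_root' (a : kˣ) (n : ℕ) :
    sigmaHom k a n (AdjoinRoot.root _) = ((a⁻¹ : kˣ) : k) • AdjoinRoot.root _ := by
  apply AdjoinRoot.liftAlgHom_root

lemma tauHom_root' (n : ℕ) :
    tauHom k n (AdjoinRoot.root _) =
      ∑ i ∈ Finset.Ico 1 n, AdjoinRoot.root (X ^ n : k[X]) ^ i := by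
  apply AdjoinRoot.liftAlgHom_root

lemma projHom_root' (m n : ℕ) (h : n ≤ m) :
    projHom k m n h (AdjoinRoot.root _) = AdjoinRoot.root _ := by
  apply AdjoinRoot.liftAlgHom_root

lemma repr_sigma (n : ℕ) (a : kˣ) (z : AdjoinRoot (X ^ n : k[X])) (j : Fin n) :
    (bs k n).repr (sigmaHom k a n z) j
      = (bs k n).repr z j * ((a⁻¹ : kˣ) : k) ^ (j : ℕ) := by
  conv_lhs => rw [← (bs k n).sum_repr z]
  rw [map_sum]
  have : ∀ i : Fin n, sigmaHom k a n ((bs k n).repr z i • bs k n i)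
      = ((bs k n).repr z i * ((a⁻¹ : kˣ) : k) ^ (i : ℕ))
          • AdjoinRoot.root (X ^ n : k[X]) ^ (i : ℕ) := by
    intro i
    rw [map_smul, bs_apply, map_pow, sigmaHom_root', _root_.smul_pow, smul_smul]
  simp_rw [this]
  rw [repr_sum]

/-- sums over `Ico 1 n` equal sums over nonzero elements of `Fin n`. -/
lemma sum_Ico_fin {M : Type*} [AddCommGroup M] (n : ℕ) (hn : 0 < n) (φ : ℕ → M) :
    ∑ i ∈ Finset.Ico 1 n, φ i = ∑ i ∈ Finset.univ.erase (⟨0, hn⟩ : Fin n), φ (i : ℕ) := by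
  rw [Finset.sum_erase_eq_sub (Finset.mem_univ _), Fin.sum_univ_eq_sum_range,
    Finset.sum_Ico_eq_sub φ hn, Finset.sum_range_one]

lemma key [CharZero k] (n : ℕ) (hn : 2 ≤ n)
    (β : ↥(truncIdeal k n) →ₗ[ℚ] ↥(truncIdeal k n))
    (hσ : ∀ a : kˣ, ∀ x y : ↥(truncIdeal k n),
      (y : AdjoinRoot (X ^ n : k[X])) = sigmaHom k a n (x : AdjoinRoot (X ^ n : k[X])) →
      ((β y : ↥(truncIdeal k n)) : AdjoinRoot (X ^ n : k[X])) =
        sigmaHom k a n ((β x : ↥(truncIdeal k n)) : AdjoinRoot (X ^ n : k[X])))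
    (hτ : ∀ x y : ↥(truncIdeal k n),
      (y : AdjoinRoot (X ^ n : k[X])) = tauHom k n (x : AdjoinRoot (X ^ n : k[X])) →
      ((β y : ↥(truncIdeal k n)) : AdjoinRoot (X ^ n : k[X])) =
        tauHom k n ((β x : ↥(truncIdeal k n)) : AdjoinRoot (X ^ n : k[X]))) :
    ∃ c : k, ∀ x : ↥(truncIdeal k n),
      ((β x : ↥(truncIdeal k n)) : AdjoinRoot (X ^ n : k[X])) =
        c • (x : AdjoinRoot (X ^ n : k[X])) := by
  have h1n : 1 < n := hn
  have h0n : 0 < n := by omega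
  set R := AdjoinRoot (X ^ n : k[X]) with hRdef
  set r : R := AdjoinRoot.root (X ^ n : k[X]) with hrdef
  -- subtype elements x • r^i
  have hmem : ∀ (x : k) (i : Fin n), (i : ℕ) ≠ 0 → x • r ^ (i : ℕ) ∈ truncIdeal k n :=
    fun x i h => smul_pow_mem k n x i h
  let v : k → Fin n → ↥(truncIdeal k n) := fun x i =>
    if h : (i : ℕ) = 0 then 0 else ⟨x • r ^ (i : ℕ), hmem x i h⟩
  have hv_coe : ∀ (x : k) (i : Fin n), (i : ℕ) ≠ 0 →
      ((v x i : ↥(truncIdeal k n)) : R) = x • r ^ (i : ℕ) := by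
    intro x i h; simp only [v, dif_neg h]
  -- Claim 1: β (v x i) is supported on coordinate i
  have claim1 : ∀ (x : k) (i : Fin n), (i : ℕ) ≠ 0 →
      ((β (v x i) : ↥(truncIdeal k n)) : R)
        = ((bs k n).repr ((β (v x i) : ↥(truncIdeal k n)) : R) i) • r ^ (i : ℕ) := by
    intro x i hi
    set W : R := ((β (v x i) : ↥(truncIdeal k n)) : R) with hWdef
    have two_ne : (2 : k) ≠ 0 := two_ne_zero
    set a : kˣ := Units.mk0 (2 : k) two_ne with ha
    have hainv : ((a⁻¹ : kˣ) : k) = (2 : k)⁻¹ := by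
      simp [ha]
    have hratsmul : ∀ w : R, (((2 : ℚ) ^ (i : ℕ))⁻¹ : ℚ) • w = ((2 : k) ^ (i : ℕ))⁻¹ • w := by
      intro w
      rw [← algebraMap_smul k ((((2 : ℚ) ^ (i : ℕ))⁻¹ : ℚ)) w, map_inv₀, map_pow]
      norm_num
    have hy : (((((2 : ℚ) ^ (i : ℕ))⁻¹ : ℚ) • v x i : ↥(truncIdeal k n)) : R)
        = sigmaHom k a n ((v x i : ↥(truncIdeal k n)) : R) := by
      rw [Submodule.coe_smul_of_tower, hv_coe x i hi, map_smul, map_pow, sigmaHom_root',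
        hainv, _root_.smul_pow, hratsmul, inv_pow, smul_comm]
    have h2 := hσ a (v x i) ((((2 : ℚ) ^ (i : ℕ))⁻¹ : ℚ) • v x i) hy
    rw [map_smul, Submodule.coe_smul_of_tower, hratsmul] at h2
    -- h2 : (2^i)⁻¹ • W = sigmaHom a n W
    have hcoef : ∀ j : Fin n, j ≠ i → (bs k n).repr W j = 0 := by
      intro j hj
      have h3 := congrArg (fun z => (bs k n).repr z j) h2.symm
      simp only [map_smul, Finsupp.smul_apply, smul_eq_mul] at h3
      rw [repr_sigma, hainv, inv_pow] at h3
      -- h3 : repr W j * ((2^j)⁻¹) = (2^i)⁻¹ * repr W j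
      by_contra hne
      rw [mul_comm ((bs k n).repr W j)] at h3
      have h4 := mul_right_cancel₀ hne h3
      have h5 : ((2 : k) ^ (j : ℕ)) = (2 : k) ^ (i : ℕ) := by
        have := congrArg (·⁻¹) h4
        simpa using this
      have h6 : ((2 ^ (j : ℕ) : ℕ) : k) = ((2 ^ (i : ℕ) : ℕ) : k) := by push_cast; exact h5
      have h7 : (2 : ℕ) ^ (j : ℕ) = 2 ^ (i : ℕ) := Nat.cast_injective h6
      exact hj (Fin.ext (Nat.pow_right_injective le_rfl h7))
    conv_lhs => rw [← (bs k n).sum_repr W]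
    rw [Finset.sum_eq_single i]
    · rw [bs_apply]
    · intro j _ hj
      rw [hcoef j hj, zero_smul]
    · intro h; exact absurd (Finset.mem_univ i) h
  set i1 : Fin n := ⟨1, h1n⟩ with hi1
  have hi1ne : (i1 : ℕ) ≠ 0 := one_ne_zero
  set c : k := (bs k n).repr ((β (v 1 i1) : ↥(truncIdeal k n)) : R) i1 with hc
  have claim2 : ∀ x : k, ((β (v x i1) : ↥(truncIdeal k n)) : R) = (x * c) • r ^ (1 : ℕ) := by
    intro x
    by_cases hx : x = 0
    · have hv0 : v x i1 = 0 := by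
        apply Subtype.ext
        rw [hv_coe x i1 hi1ne, hx, zero_smul]; rfl
      rw [hv0, map_zero, hx, zero_mul, zero_smul]; rfl
    · set a : kˣ := Units.mk0 x⁻¹ (inv_ne_zero hx) with ha
      have hainv : ((a⁻¹ : kˣ) : k) = x := by simp [ha]
      have hy : ((v x i1 : ↥(truncIdeal k n)) : R)
          = sigmaHom k a n ((v 1 i1 : ↥(truncIdeal k n)) : R) := by
        rw [hv_coe x i1 hi1ne, hv_coe 1 i1 hi1ne, map_smul, map_pow, sigmaHom_root', hainv]
        simp [hi1, hrdef]
      have h2 := hσ a (v 1 i1) (v x i1) hy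
      rw [claim1 1 i1 hi1ne, ← hc, map_smul, map_pow, sigmaHom_root', hainv] at h2
      rw [h2]
      rw [_root_.smul_pow, smul_smul, mul_comm c]
      norm_num
      rfl
  set t : Finset (Fin n) := Finset.univ.erase (⟨0, h0n⟩ : Fin n) with ht
  have htne : ∀ i ∈ t, (i : ℕ) ≠ 0 := by
    intro i hi
    have := Finset.ne_of_mem_erase hi
    simpa [Fin.ext_iff] using this
  set S : R := ∑ i ∈ Finset.Ico 1 n, r ^ i with hS
  have hSsum : ∀ x : k, x • S = ∑ i ∈ t, x • r ^ (i : ℕ) := by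
    intro x
    rw [hS, Finset.smul_sum]
    exact sum_Ico_fin n h0n (fun j => x • r ^ j)
  have claim3 : ∀ (x : k), ∀ i ∈ t,
      ((β (v x i) : ↥(truncIdeal k n)) : R) = (x * c) • r ^ (i : ℕ) := by
    intro x
    have memS : x • S ∈ truncIdeal k n := by
      rw [hSsum x]
      exact sum_mem (fun i hi => hmem x i (htne i hi))
    have hy : ((⟨x • S, memS⟩ : ↥(truncIdeal k n)) : R)
        = tauHom k n ((v x i1 : ↥(truncIdeal k n)) : R) := by
      rw [hv_coe x i1 hi1ne, map_smul, map_pow, tauHom_root']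
      rw [pow_one, ← hS]
    have h3 := hτ (v x i1) ⟨x • S, memS⟩ hy
    rw [claim2 x, map_smul, map_pow, tauHom_root'] at h3
    have hysum : (⟨x • S, memS⟩ : ↥(truncIdeal k n)) = ∑ i ∈ t, v x i := by
      apply Subtype.ext
      rw [AddSubmonoidClass.coe_finset_sum]
      show x • S = _
      rw [hSsum x]
      exact Finset.sum_congr rfl (fun i hi => (hv_coe x i (htne i hi)).symm)
    rw [hysum, map_sum, AddSubmonoidClass.coe_finset_sum] at h3
    have hleft : ∀ i ∈ t, ((β (v x i) : ↥(truncIdeal k n)) : R)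
        = ((bs k n).repr ((β (v x i) : ↥(truncIdeal k n)) : R) i) • bs k n i := by
      intro i hi; rw [bs_apply]; exact claim1 x i (htne i hi)
    have hright : (x * c) • (∑ j ∈ Finset.Ico 1 n, r ^ j) ^ 1
        = ∑ i ∈ t, (x * c) • bs k n i := by
      rw [pow_one, ← hS, hSsum (x * c)]
      exact Finset.sum_congr rfl (fun i hi => by rw [bs_apply])
    rw [Finset.sum_congr rfl hleft, hright] at h3
    have hzero : ∑ i ∈ t,
        (((bs k n).repr ((β (v x i) : ↥(truncIdeal k n)) : R) i) - (x * c)) • bs k n i = 0 := by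
      simp_rw [sub_smul]
      rw [Finset.sum_sub_distrib, h3, sub_self]
    have li := (bs k n).linearIndependent
    rw [linearIndependent_iff'] at li
    intro i hi
    have h5 := li t (fun j => ((bs k n).repr ((β (v x j) : ↥(truncIdeal k n)) : R) j) - (x * c))
      hzero i hi
    have h6 : (bs k n).repr ((β (v x i) : ↥(truncIdeal k n)) : R) i = x * c :=
      sub_eq_zero.mp h5
    rw [claim1 x i (htne i hi), h6]
  -- conclusion
  refine ⟨c, fun z => ?_⟩
  have hz0 : (bs k n).repr (z : R) ⟨0, h0n⟩ = 0 :=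
    mem_truncIdeal_repr_zero k n (by omega) (z : R) z.2
  have hcoez : (z : R) = ∑ i ∈ t, ((bs k n).repr (z : R) i) • bs k n i := by
    rw [ht, Finset.sum_erase_eq_sub (Finset.mem_univ _), hz0, zero_smul, sub_zero,
      (bs k n).sum_repr (z : R)]
  have hzdecomp : z = ∑ i ∈ t, v ((bs k n).repr (z : R) i) i := by
    apply Subtype.ext
    rw [AddSubmonoidClass.coe_finset_sum]
    have heach : ∀ i ∈ t, ((v ((bs k n).repr (z : R) i) i : ↥(truncIdeal k n)) : R)
        = ((bs k n).repr (z : R) i) • bs k n i := by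
      intro i hi
      rw [hv_coe _ i (htne i hi), bs_apply]
    rw [Finset.sum_congr rfl heach]
    exact hcoez
  have h8 : ((β z : ↥(truncIdeal k n)) : R)
      = ∑ i ∈ t, ((β (v ((bs k n).repr (z : R) i) i) : ↥(truncIdeal k n)) : R) := by
    conv_lhs => rw [hzdecomp]
    rw [map_sum, AddSubmonoidClass.coe_finset_sum]
  rw [h8]
  have h9 : ∀ i ∈ t, ((β (v ((bs k n).repr (z : R) i) i) : ↥(truncIdeal k n)) : R)
      = c • (((bs k n).repr (z : R) i) • bs k n i) := by
    intro i hi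
    rw [claim3 _ i hi, bs_apply, smul_smul, mul_comm c]
  rw [Finset.sum_congr rfl h9, ← Finset.smul_sum, ← hcoez]

lemma root_mem_truncIdeal (n : ℕ) :
    AdjoinRoot.root (X ^ n : k[X]) ∈ truncIdeal k n :=
  Ideal.mem_span_singleton.2 dvd_rfl

lemma root_ne_zero' (n : ℕ) (hn : 2 ≤ n) :
    AdjoinRoot.root (X ^ n : k[X]) ≠ 0 := by
  have h := (bs k n).ne_zero ⟨1, hn⟩
  rw [bs_apply] at h
  simpa using h

/-- if a family of `ℚ`-linear maps `α n : I_n → I_n` (for `n ≥ 2`) commutes with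
the restrictions to `I_n` of the substitutions `X ↦ a⁻¹X` (`a ∈ kˣ`) and
`X ↦ X + X² + ⋯ + X^(n-1)`, and with the natural projections `I_m → I_n` (`m ≥ n ≥ 2`), then
there is a single `c ∈ k` with `α n x = c·x` for all `n ≥ 2` and `x ∈ I_n`. -/
theorem stmt_3 [NumberField k]
    (α : ∀ n : ℕ, ↥(truncIdeal k n) →ₗ[ℚ] ↥(truncIdeal k n))
    (hσ : ∀ n, 2 ≤ n → ∀ a : kˣ, ∀ x y : ↥(truncIdeal k n),
      (y : AdjoinRoot (X ^ n : k[X])) = sigmaHom k a n (x : AdjoinRoot (X ^ n : k[X])) →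
      ((α n y : ↥(truncIdeal k n)) : AdjoinRoot (X ^ n : k[X])) =
        sigmaHom k a n ((α n x : ↥(truncIdeal k n)) : AdjoinRoot (X ^ n : k[X])))
    (hτ : ∀ n, 2 ≤ n → ∀ x y : ↥(truncIdeal k n),
      (y : AdjoinRoot (X ^ n : k[X])) = tauHom k n (x : AdjoinRoot (X ^ n : k[X])) →
      ((α n y : ↥(truncIdeal k n)) : AdjoinRoot (X ^ n : k[X])) =
        tauHom k n ((α n x : ↥(truncIdeal k n)) : AdjoinRoot (X ^ n : k[X])))
    (hπ : ∀ m n : ℕ, 2 ≤ n → ∀ hnm : n ≤ m,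
      ∀ (x : ↥(truncIdeal k m)) (y : ↥(truncIdeal k n)),
      (y : AdjoinRoot (X ^ n : k[X])) = projHom k m n hnm (x : AdjoinRoot (X ^ m : k[X])) →
      ((α n y : ↥(truncIdeal k n)) : AdjoinRoot (X ^ n : k[X])) =
        projHom k m n hnm ((α m x : ↥(truncIdeal k m)) : AdjoinRoot (X ^ m : k[X]))) :
    ∃ c : k, ∀ n, 2 ≤ n → ∀ x : ↥(truncIdeal k n),
      ((α n x : ↥(truncIdeal k n)) : AdjoinRoot (X ^ n : k[X])) =
        c • (x : AdjoinRoot (X ^ n : k[X])) := by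
  have hkey : ∀ n, 2 ≤ n → ∃ c : k, ∀ x : ↥(truncIdeal k n),
      ((α n x : ↥(truncIdeal k n)) : AdjoinRoot (X ^ n : k[X])) =
        c • (x : AdjoinRoot (X ^ n : k[X])) :=
    fun n hn => key k n hn (α n) (hσ n hn) (hτ n hn)
  obtain ⟨c2, hc2⟩ := hkey 2 le_rfl
  refine ⟨c2, fun n hn x => ?_⟩
  obtain ⟨cn, hcn⟩ := hkey n hn
  -- show cn = c2 using the projection
  have h2n : (2 : ℕ) ≤ n := hn
  have hy : ((⟨_, root_mem_truncIdeal k 2⟩ : ↥(truncIdeal k 2)) :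
        AdjoinRoot (X ^ 2 : k[X]))
      = projHom k n 2 h2n ((⟨_, root_mem_truncIdeal k n⟩ : ↥(truncIdeal k n)) :
        AdjoinRoot (X ^ n : k[X])) := by
    rw [projHom_root']
  have h3 := hπ n 2 le_rfl h2n ⟨_, root_mem_truncIdeal k n⟩ ⟨_, root_mem_truncIdeal k 2⟩ hy
  rw [hc2, hcn, map_smul, projHom_root'] at h3
  have hcc : c2 = cn := by
    have := sub_eq_zero.mpr h3
    rw [← sub_smul] at this
    rcases smul_eq_zero.mp this with h | h
    · exact sub_eq_zero.mp h
    · exact absurd h (root_ne_zero' k 2 le_rfl)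
  rw [hcn x, hcc]


end
end

section
/- Let k be a field of characteristic zero, K a function field of one variable over k (a finitely generated field extension of k of transcendence degree 1), and R ⊂ K a discrete valuation ring containing k with maximal ideal 𝔪 and with fraction field K. Let L be a finite extension of K, S the integral closure of R in L, 𝔫_1, …, 𝔫_r the maximal ideals of S, and e_i the ramification index of 𝔫_i over 𝔪. Let m ≥ 1 and n_1, …, n_r ≥ 1 be integers such that n_i − 1 ≥ e_i(m − 1) for all i. Then for every x ∈ 𝔫_1^{n_1} ∩ ⋯ ∩ 𝔫_r^{n_r}, the trace Tr_{L/K}(x) lies in 𝔪^m (in particular Tr_{L/K}(x) ∈ R). -/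
set_option synthInstance.maxHeartbeats 400000

set_option maxHeartbeats 1000000

open UniqueFactorizationMonoid in
lemma stmt5_aux {R S : Type*} [CommRing R] [IsDomain R] [IsDiscreteValuationRing R]
    [CommRing S] [IsDomain S] [IsDedekindDomain S] [Algebra R S]
    [Module.Finite R S] [Module.Free R S]
    (hfinj : Function.Injective (algebraMap R S))
    (r : ℕ) (𝔫 : Fin r → Ideal S)
    (h𝔫max : ∀ i, (𝔫 i).IsMaximal) (h𝔫inj : Function.Injective 𝔫)
    (h𝔫all : ∀ P : Ideal S, P.IsMaximal → ∃ i, P = 𝔫 i)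
    (m : ℕ) (hm : 1 ≤ m) (n : Fin r → ℕ) (hn : ∀ i, 1 ≤ n i)
    (hcond : ∀ i, Ideal.ramificationIdx' 
        (IsLocalRing.maximalIdeal R) (𝔫 i) * (m - 1) ≤ n i - 1)
    (x : S) (hx : ∀ i, x ∈ (𝔫 i) ^ (n i)) :
    Algebra.trace R S x ∈ (IsLocalRing.maximalIdeal R) ^ m := by
  classical
  haveI : Algebra.IsIntegral R S := Algebra.IsIntegral.of_finite R S
  have hp0 : IsLocalRing.maximalIdeal R ≠ ⊥ := IsDiscreteValuationRing.not_a_field R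
  have hI0 : (IsLocalRing.maximalIdeal R).map (algebraMap R S) ≠ ⊥ := by
    rw [Ne, Ideal.map_eq_bot_iff_of_injective hfinj]
    exact hp0
  have h𝔫0 : ∀ i, 𝔫 i ≠ ⊥ := by
    intro i h
    apply hp0
    have hc : (𝔫 i).comap (algebraMap R S) = IsLocalRing.maximalIdeal R :=
      IsLocalRing.eq_maximalIdeal (Ideal.isMaximal_comap_of_isIntegral_of_isMaximal (R := R) (𝔫 i))
    rw [← hc, h, ← RingHom.ker_eq_comap_bot, (RingHom.injective_iff_ker_eq_bot (algebraMap R S)).mp hfinj]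
  have hprime : ∀ i, Prime (𝔫 i) := fun i => Ideal.prime_of_isPrime (h𝔫0 i) (h𝔫max i).isPrime
  have hcount : ∀ i, Ideal.ramificationIdx'  (IsLocalRing.maximalIdeal R) (𝔫 i) = (normalizedFactors ((IsLocalRing.maximalIdeal R).map (algebraMap R S))).count (𝔫 i) :=
    fun i => Ideal.IsDedekindDomain.ramificationIdx'_eq_normalizedFactors_count hI0
      (h𝔫max i).isPrime (h𝔫0 i)
  have hK1 : (IsLocalRing.maximalIdeal R).map (algebraMap R S) = ∏ i, 𝔫 i ^ Ideal.ramificationIdx'  (IsLocalRing.maximalIdeal R) (𝔫 i) := by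
    have himage : (normalizedFactors ((IsLocalRing.maximalIdeal R).map (algebraMap R S))).toFinset ⊆
        Finset.univ.image 𝔫 := by
      intro P hP
      have hPp : Prime P := prime_of_normalized_factor P (Multiset.mem_toFinset.mp hP)
      have hPmax : P.IsMaximal :=
        Ideal.IsPrime.isMaximal (Ideal.isPrime_of_prime hPp) hPp.ne_zero
      obtain ⟨i, rfl⟩ := h𝔫all P hPmax
      exact Finset.mem_image_of_mem _ (Finset.mem_univ i)
    calc (IsLocalRing.maximalIdeal R).map (algebraMap R S)
        = (normalizedFactors ((IsLocalRing.maximalIdeal R).map (algebraMap R S))).prod :=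
          (associated_iff_eq.mp (prod_normalizedFactors hI0)).symm
      _ = ∏ P ∈ (normalizedFactors ((IsLocalRing.maximalIdeal R).map (algebraMap R S))).toFinset,
            P ^ (normalizedFactors ((IsLocalRing.maximalIdeal R).map (algebraMap R S))).count P := by
            rw [← Finset.prod_multiset_map_count, Multiset.map_id']
      _ = ∏ P ∈ Finset.univ.image 𝔫,
            P ^ (normalizedFactors ((IsLocalRing.maximalIdeal R).map (algebraMap R S))).count P := by
            refine Finset.prod_subset himage (fun P _ hP => ?_)
            rw [Multiset.count_eq_zero_of_notMem (fun h => hP (Multiset.mem_toFinset.mpr h)),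
              pow_zero]
      _ = ∏ i, 𝔫 i ^ (normalizedFactors ((IsLocalRing.maximalIdeal R).map (algebraMap R S))).count (𝔫 i) :=
            Finset.prod_image (fun i _ j _ h => h𝔫inj h)
      _ = ∏ i, 𝔫 i ^ Ideal.ramificationIdx'  (IsLocalRing.maximalIdeal R) (𝔫 i) := Finset.prod_congr rfl (fun i _ => by rw [hcount i])
  have hxmem : x ∈ ((IsLocalRing.maximalIdeal R).map (algebraMap R S)) ^ (m - 1) * ∏ i, 𝔫 i := by
    have h1 : x ∈ ∏ i, 𝔫 i ^ (Ideal.ramificationIdx'  (IsLocalRing.maximalIdeal R) (𝔫 i) * (m - 1) + 1) := by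
      rw [← IsDedekindDomain.inf_pow_eq_prod_of_prime Finset.univ 𝔫 (fun i => Ideal.ramificationIdx'  (IsLocalRing.maximalIdeal R) (𝔫 i) * (m - 1) + 1)
        (fun i _ => hprime i) (fun i _ j _ hij => fun h => hij (h𝔫inj h))]
      rw [Submodule.mem_finsetInf]
      intro i _
      refine Ideal.pow_le_pow_right ?_ (hx i)
      have h := hcond i
      have h' := hn i
      omega
    have h2 : (∏ i, 𝔫 i ^ (Ideal.ramificationIdx'  (IsLocalRing.maximalIdeal R) (𝔫 i) * (m - 1) + 1))
        = ((IsLocalRing.maximalIdeal R).map (algebraMap R S)) ^ (m - 1) * ∏ i, 𝔫 i := by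
      rw [hK1, ← Finset.prod_pow, ← Finset.prod_mul_distrib]
      refine Finset.prod_congr rfl (fun i _ => ?_)
      rw [← pow_mul, pow_succ]
    rwa [h2] at h1
  obtain ⟨t, ht⟩ := Submodule.IsPrincipal.principal (IsLocalRing.maximalIdeal R)
  rw [Ideal.submodule_span_eq] at ht
  have hIspan : ((IsLocalRing.maximalIdeal R).map (algebraMap R S)) ^ (m - 1)
      = Ideal.span {(algebraMap R S) (t ^ (m - 1))} := by
    rw [ht, Ideal.map_span, Set.image_singleton, Ideal.span_singleton_pow, map_pow]
  rw [hIspan] at hxmem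
  obtain ⟨y, hyJ, hy⟩ := Ideal.mem_span_singleton_mul.mp hxmem
  have hy𝔫 : ∀ i, y ∈ 𝔫 i := fun i =>
    Submodule.mem_finsetInf.mp (Ideal.prod_le_inf hyJ) i (Finset.mem_univ i)
  have htry : Algebra.trace R S y ∈ IsLocalRing.maximalIdeal R := by
    have hyrad : y ∈ ((IsLocalRing.maximalIdeal R).map (algebraMap R S)).radical := by
      rw [Ideal.radical_eq_sInf]
      refine Ideal.mem_sInf.mpr ?_
      rintro P ⟨hIP, hPprime⟩
      have hP0 : P ≠ ⊥ := fun h => hI0 (le_bot_iff.mp (h ▸ hIP))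
      obtain ⟨i, rfl⟩ := h𝔫all P (hPprime.isMaximal hP0)
      exact hy𝔫 i
    obtain ⟨N, hN⟩ := hyrad
    have hnil : IsNilpotent (Ideal.Quotient.mk ((IsLocalRing.maximalIdeal R).map (algebraMap R S)) y) := by
      refine ⟨N, ?_⟩
      rw [← map_pow, Ideal.Quotient.eq_zero_iff_mem]
      exact hN
    haveI : (IsLocalRing.maximalIdeal R).IsPrime :=
      (IsLocalRing.maximalIdeal.isMaximal R).isPrime
    have h0 : Ideal.Quotient.mk (IsLocalRing.maximalIdeal R) (Algebra.trace R S y) = 0 := by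
      rw [← Algebra.trace_quotient_mk (R := R) (S := S) y]
      exact (Algebra.isNilpotent_trace_of_isNilpotent hnil).eq_zero
    exact Ideal.Quotient.eq_zero_iff_mem.mp h0
  have hx_eq : x = (t ^ (m - 1)) • y := by
    rw [Algebra.smul_def]; exact hy.symm
  have htr_eq : Algebra.trace R S x = t ^ (m - 1) * Algebra.trace R S y := by
    rw [hx_eq, LinearMap.map_smul, smul_eq_mul]
  rw [htr_eq]
  have h1 : t ^ (m - 1) ∈ (IsLocalRing.maximalIdeal R) ^ (m - 1) := by
    rw [ht, Ideal.span_singleton_pow]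
    exact Ideal.subset_span rfl
  have h2 := Ideal.mul_mem_mul h1 htry
  rwa [← pow_succ, Nat.sub_add_cancel hm] at h2

/-- trace estimate. With `R` a DVR containing `k` (char zero), fraction field `K`
a function field of one variable over `k`, `L/K` finite, `S` the integral closure of `R` in
`L` with maximal ideals `𝔫 1, …, 𝔫 r` of ramification indices `e i`, and integers `m ≥ 1`,
`n i ≥ 1` with `n i - 1 ≥ e i * (m - 1)`: for any `x ∈ ⋂ i, (𝔫 i) ^ (n i)`, the trace
`Tr_{L/K}(x)` lies in `𝔪 ^ m`. -/
theorem stmt_5 (k K : Type*) [Field k] [CharZero k] [Field K] [Algebra k K]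
    (hfg : ∃ s : Finset K, IntermediateField.adjoin k (s : Set K) = ⊤)
    (htr : ∃ x : K, IsTranscendenceBasis k (fun _ : Unit => x))
    (R : Type*) [CommRing R] [IsDomain R] [IsDiscreteValuationRing R]
    [Algebra k R] [Algebra R K] [IsFractionRing R K] [IsScalarTower k R K]
    (L : Type*) [Field L] [Algebra K L] [FiniteDimensional K L]
    [Algebra R L] [IsScalarTower R K L]
    (r : ℕ) (𝔫 : Fin r → Ideal (integralClosure R L))
    (h𝔫max : ∀ i, (𝔫 i).IsMaximal) (h𝔫inj : Function.Injective 𝔫)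
    (h𝔫all : ∀ P : Ideal (integralClosure R L), P.IsMaximal → ∃ i, P = 𝔫 i)
    (m : ℕ) (hm : 1 ≤ m) (n : Fin r → ℕ) (hn : ∀ i, 1 ≤ n i)
    (hcond : ∀ i, Ideal.ramificationIdx'
        (IsLocalRing.maximalIdeal R) (𝔫 i) * (m - 1) ≤ n i - 1)
    (x : integralClosure R L) (hx : ∀ i, x ∈ (𝔫 i) ^ (n i)) :
    ∃ y ∈ (IsLocalRing.maximalIdeal R) ^ m,
      algebraMap R K y = Algebra.trace K L (algebraMap (integralClosure R L) L x) := by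
  haveI : CharZero K := charZero_of_injective_algebraMap (algebraMap k K).injective
  haveI : IsDedekindDomain (integralClosure R L) := integralClosure.isDedekindDomain R K L
  haveI : Module.Finite R (integralClosure R L) := IsIntegralClosure.finite R K L _
  have hRL : Function.Injective (algebraMap R L) := by
    rw [IsScalarTower.algebraMap_eq R K L]
    exact (algebraMap K L).injective.comp (IsFractionRing.injective R K)
  haveI : Module.IsTorsionFree R L := Module.isTorsionFree_iff_algebraMap_injective.mpr hRL
  haveI : Module.Free R (integralClosure R L) := IsIntegralClosure.module_free R K L _
  have hfinj : Function.Injective (algebraMap R (integralClosure R L)) := fun a b hab => by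
    apply hRL
    rw [IsScalarTower.algebraMap_apply R (integralClosure R L) L, hab,
      ← IsScalarTower.algebraMap_apply R (integralClosure R L) L]
  haveI : Module.IsTorsionFree R (integralClosure R L) :=
    Module.isTorsionFree_iff_algebraMap_injective.mpr hfinj
  refine ⟨Algebra.intTrace R (integralClosure R L) x, ?_,
    Algebra.algebraMap_intTrace (A := R) (K := K) (L := L) x⟩
  rw [Algebra.intTrace_eq_trace]
  exact stmt5_aux hfinj r 𝔫 h𝔫max h𝔫inj h𝔫all m hm n hn hcond x hx
end

section
/- Let k be a field of characteristic zero and R a discrete valuation ring that is a k-algebra, with maximal ideal 𝔪, such that the composite k → R → R/𝔪 is an isomorphism of fields. Let t ∈ R be a uniformizer (a generator of 𝔪), and assume that the module of Kähler differentials Ω¹_{R/k} is a free R-module with basis the single element dt. Then for every integer n ≥ 1 the universal derivation d : R → Ω¹_{R/k} induces a well-defined k-linear bijection 𝔪/𝔪^n → Ω¹_{R/k} / 𝔪^{n−1}·Ω¹_{R/k}. -/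
set_option synthInstance.maxHeartbeats 400000
set_option maxHeartbeats 1000000
set_option linter.unusedSectionVars false

open IsLocalRing

section StmtSevenAux

variable {k : Type*} [Field k] [CharZero k]
variable {R : Type*} [CommRing R] [IsDomain R] [IsDiscreteValuationRing R] [Algebra k R]

lemma stmt7_aux_repr (b : Module.Basis Unit R (Ω[R⁄k])) (ω : Ω[R⁄k]) :
    (b.repr ω ()) • b () = ω := by
  have := b.sum_repr ω
  simpa using this

lemma stmt7_aux_mem_smul_top (b : Module.Basis Unit R (Ω[R⁄k])) (I : Ideal R) (ω : Ω[R⁄k]) :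
    ω ∈ I • (⊤ : Submodule R (Ω[R⁄k])) ↔ b.repr ω () ∈ I := by
  constructor
  · intro h
    set φ : (Ω[R⁄k]) →ₗ[R] R := (Finsupp.lapply ()).comp b.repr.toLinearMap with hφ
    have hmap : Submodule.map φ (I • (⊤ : Submodule R (Ω[R⁄k]))) ≤ I := by
      rw [Submodule.map_smul'']
      refine le_trans (Submodule.smul_mono le_rfl le_top) ?_
      exact Submodule.smul_le.mpr fun r hr m _ => by
        simpa [smul_eq_mul] using I.mul_mem_right m hr
    exact hmap ⟨ω, h, rfl⟩
  · intro h
    rw [← stmt7_aux_repr b ω]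
    exact Submodule.smul_mem_smul h Submodule.mem_top

lemma stmt7_aux_D_mem (t : R) (ht : maximalIdeal R = Ideal.span {t}) {m : ℕ} (_hm : 1 ≤ m)
    {x : R} (hx : x ∈ maximalIdeal R ^ m) :
    KaehlerDifferential.D k R x ∈ (maximalIdeal R ^ (m - 1)) • (⊤ : Submodule R (Ω[R⁄k])) := by
  rw [ht, Ideal.span_singleton_pow, Ideal.mem_span_singleton] at hx
  obtain ⟨a, rfl⟩ := hx
  have htm : t ^ m ∈ maximalIdeal R ^ (m - 1) := by
    refine Ideal.pow_le_pow_right (Nat.sub_le m 1) ?_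
    rw [ht, Ideal.span_singleton_pow]
    exact Ideal.mem_span_singleton.mpr dvd_rfl
  have htm1 : t ^ (m - 1) ∈ maximalIdeal R ^ (m - 1) := by
    rw [ht, Ideal.span_singleton_pow]
    exact Ideal.mem_span_singleton.mpr dvd_rfl
  rw [Derivation.leibniz]
  refine Submodule.add_mem _ ?_ ?_
  · exact Submodule.smul_mem_smul htm Submodule.mem_top
  · rw [Derivation.leibniz_pow]
    have : a • (m • t ^ (m - 1) • KaehlerDifferential.D k R t)
        = (a * m * t ^ (m - 1)) • KaehlerDifferential.D k R t := by
      rw [← Nat.cast_smul_eq_nsmul R m, smul_smul, smul_smul, mul_assoc]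
    rw [this]
    have : (a * m * t ^ (m - 1)) ∈ maximalIdeal R ^ (m - 1) :=
      Ideal.mul_mem_left _ _ htm1
    exact Submodule.smul_mem_smul this Submodule.mem_top

lemma stmt7_aux_anti (t : R) (ht : maximalIdeal R = Ideal.span {t}) (i : ℕ) (c : k) :
    ∃ x ∈ maximalIdeal R,
      KaehlerDifferential.D k R x
        = (algebraMap k R c * t ^ i) • KaehlerDifferential.D k R t := by
  refine ⟨algebraMap k R (c / (i + 1 : k)) * t ^ (i + 1), ?_, ?_⟩
  · refine Ideal.mul_mem_left _ _ ?_
    rw [ht]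
    exact Ideal.mem_span_singleton.mpr ⟨t ^ i, by ring⟩
  · rw [Derivation.leibniz, Derivation.map_algebraMap, smul_zero, add_zero,
      Derivation.leibniz_pow]
    rw [← Nat.cast_smul_eq_nsmul R (i + 1), smul_smul, smul_smul]
    congr 1
    have h1 : ((i : R) + 1) = algebraMap k R ((i : k) + 1) := by
      push_cast
      simp
    rw [Nat.add_sub_cancel, Nat.cast_add, Nat.cast_one, h1, ← map_mul, div_mul_cancel₀]
    exact Nat.cast_add_one_ne_zero i

lemma stmt7_aux_digits (hres : Function.Surjective (algebraMap k (R ⧸ maximalIdeal R)))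
    (t : R) (ht : maximalIdeal R = Ideal.span {t}) (m : ℕ) (a : R) :
    ∃ c : ℕ → k,
      a - ∑ i ∈ Finset.range m, algebraMap k R (c i) * t ^ i ∈ maximalIdeal R ^ m := by
  induction m generalizing a with
  | zero => exact ⟨0, by simp⟩
  | succ m ih =>
    obtain ⟨c₀, hc₀⟩ := hres (Ideal.Quotient.mk (maximalIdeal R) a)
    have h1 : a - algebraMap k R c₀ ∈ maximalIdeal R := by
      have : Ideal.Quotient.mk (maximalIdeal R) (a - algebraMap k R c₀) = 0 := by
        rw [map_sub, ← Ideal.Quotient.algebraMap_eq, ← IsScalarTower.algebraMap_apply,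
          hc₀, Ideal.Quotient.algebraMap_eq, sub_self]
      exact Ideal.Quotient.eq_zero_iff_mem.mp this
    rw [ht, Ideal.mem_span_singleton] at h1
    obtain ⟨a₁, ha₁⟩ := h1
    obtain ⟨c, hc⟩ := ih a₁
    refine ⟨fun i => Nat.casesOn i c₀ c, ?_⟩
    rw [Finset.sum_range_succ']
    simp only [pow_zero, mul_one]
    show a - (∑ x ∈ Finset.range m, algebraMap k R (c x) * t ^ (x + 1)
        + algebraMap k R c₀) ∈ maximalIdeal R ^ (m + 1)
    have key : a - (∑ i ∈ Finset.range m, algebraMap k R (c i) * t ^ (i + 1) + algebraMap k R c₀)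
        = t * (a₁ - ∑ i ∈ Finset.range m, algebraMap k R (c i) * t ^ i) := by
      rw [mul_sub, Finset.mul_sum, ← ha₁]
      rw [show ∑ i ∈ Finset.range m, t * (algebraMap k R (c i) * t ^ i)
          = ∑ i ∈ Finset.range m, algebraMap k R (c i) * t ^ (i + 1) from
        Finset.sum_congr rfl fun i _ => by ring]
      ring
    rw [key, pow_succ']
    exact Ideal.mul_mem_mul (by rw [ht]; exact Ideal.mem_span_singleton.mpr dvd_rfl) hc

lemma stmt7_aux_surj (hres : Function.Surjective (algebraMap k (R ⧸ maximalIdeal R)))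
    (t : R) (ht : maximalIdeal R = Ideal.span {t}) (m : ℕ) (a : R) :
    ∃ x ∈ maximalIdeal R, ∃ r ∈ maximalIdeal R ^ m,
      KaehlerDifferential.D k R x = (a - r) • KaehlerDifferential.D k R t := by
  obtain ⟨c, hc⟩ := stmt7_aux_digits hres t ht m a
  choose x hx hxD using fun i => stmt7_aux_anti (k := k) t ht i (c i)
  refine ⟨∑ i ∈ Finset.range m, x i, Submodule.sum_mem _ fun i _ => hx i,
    a - ∑ i ∈ Finset.range m, algebraMap k R (c i) * t ^ i, hc, ?_⟩
  rw [map_sum]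
  simp only [hxD]
  rw [← Finset.sum_smul]
  congr 1
  rw [sub_sub_cancel]

lemma stmt7_aux_inj (hres : Function.Injective (algebraMap k (R ⧸ maximalIdeal R)))
    (t : R) (ht : maximalIdeal R = Ideal.span {t})
    (b : Module.Basis Unit R (Ω[R⁄k])) (hb : b () = KaehlerDifferential.D k R t)
    {n : ℕ} (hn : 1 ≤ n) {x : R} (hx : x ∈ maximalIdeal R)
    (hd : KaehlerDifferential.D k R x
      ∈ (maximalIdeal R ^ (n - 1)) • (⊤ : Submodule R (Ω[R⁄k]))) :
    x ∈ maximalIdeal R ^ n := by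
  rcases eq_or_ne x 0 with rfl | hx0
  · exact Submodule.zero_mem _
  haveI : CharZero (R ⧸ maximalIdeal R) := charZero_of_injective_algebraMap hres
  have irr : Irreducible t := (IsDiscreteValuationRing.irreducible_iff_uniformizer t).mpr ht
  obtain ⟨m, u, rfl⟩ := IsDiscreteValuationRing.eq_unit_mul_pow_irreducible hx0 irr
  obtain ⟨m, rfl⟩ : ∃ m', m = m' + 1 := by
    cases m with
    | zero =>
      exfalso
      rw [pow_zero, mul_one] at hx
      exact (notMem_maximalIdeal.mpr u.isUnit) hx
    | succ m' => exact ⟨m', rfl⟩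
  set c : R := b.repr (KaehlerDifferential.D k R (u : R)) () with hc
  have hDu : KaehlerDifferential.D k R (u : R) = c • KaehlerDifferential.D k R t := by
    rw [← hb, hc, stmt7_aux_repr]
  set w : R := (u : R) * ((m : R) + 1) + t * c with hwdef
  have hDx : KaehlerDifferential.D k R ((u : R) * t ^ (m + 1))
      = (t ^ m * w) • KaehlerDifferential.D k R t := by
    rw [Derivation.leibniz, Derivation.leibniz_pow, Nat.add_sub_cancel,
      ← Nat.cast_smul_eq_nsmul R (m + 1), smul_smul, smul_smul, hDu, smul_smul, ← add_smul]
    congr 1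
    push_cast
    ring
  have hmem : t ^ m * w ∈ maximalIdeal R ^ (n - 1) := by
    rw [hDx, stmt7_aux_mem_smul_top b, ← hb] at hd
    simpa [Module.Basis.repr_self] using hd
  have hw : IsUnit w := by
    rw [← notMem_maximalIdeal]
    intro hwm
    have h1 : t * c ∈ maximalIdeal R := by
      rw [ht]; exact Ideal.mul_mem_right _ _ (Ideal.mem_span_singleton.mpr dvd_rfl)
    have h2 : (u : R) * ((m : R) + 1) ∈ maximalIdeal R := by
      have := Submodule.sub_mem _ hwm h1
      simpa [hwdef] using this
    have h3 : Ideal.Quotient.mk (maximalIdeal R) ((u : R) * ((m : R) + 1)) = 0 :=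
      Ideal.Quotient.eq_zero_iff_mem.mpr h2
    rw [map_mul] at h3
    have hu0 : IsUnit (Ideal.Quotient.mk (maximalIdeal R) (u : R)) :=
      (Ideal.Quotient.mk (maximalIdeal R)).isUnit_map u.isUnit
    have hm0 : Ideal.Quotient.mk (maximalIdeal R) ((m : R) + 1) ≠ 0 := by
      rw [map_add, map_one, map_natCast]
      exact Nat.cast_add_one_ne_zero m
    exact hm0 ((hu0.mul_right_eq_zero).mp h3)
  have hdvd : t ^ (n - 1) ∣ t ^ m := by
    have h1 : t ^ (n - 1) ∣ t ^ m * w := by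
      rw [ht, Ideal.span_singleton_pow, Ideal.mem_span_singleton] at hmem
      exact hmem
    exact (Units.dvd_mul_right (u := hw.unit)).mp
      (by simp only [IsUnit.unit_spec]; exact h1)
  have hnm : n ≤ m + 1 := by
    have := (pow_dvd_pow_iff irr.ne_zero irr.not_isUnit).mp hdvd
    omega
  rw [ht, Ideal.span_singleton_pow, Ideal.mem_span_singleton]
  exact Dvd.dvd.mul_left (pow_dvd_pow t hnm) _

end StmtSevenAux

/-- For a DVR `R` over a field `k` of characteristic zero with residue field `k`,
uniformizer `t`, and `Ω¹_{R/k}` free on `dt`, the universal derivation induces a well-defined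
`k`-linear bijection `𝔪/𝔪ⁿ → Ω¹_{R/k} / 𝔪^{n-1}·Ω¹_{R/k}` for every `n ≥ 1`. -/
theorem stmt_7 (k : Type*) [Field k] [CharZero k]
    (R : Type*) [CommRing R] [IsDomain R] [IsDiscreteValuationRing R] [Algebra k R]
    (hres : Function.Bijective (algebraMap k (R ⧸ IsLocalRing.maximalIdeal R)))
    (t : R) (ht : IsLocalRing.maximalIdeal R = Ideal.span {t})
    (b : Module.Basis Unit R (Ω[R⁄k])) (hb : b () = KaehlerDifferential.D k R t)
    (n : ℕ) (hn : 1 ≤ n) :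
    ∃ f : (↥(IsLocalRing.maximalIdeal R) ⧸
          (Submodule.comap (IsLocalRing.maximalIdeal R).subtype
            ((IsLocalRing.maximalIdeal R ^ n : Ideal R) : Submodule R R))) →ₗ[k]
        ((Ω[R⁄k]) ⧸
          ((IsLocalRing.maximalIdeal R ^ (n - 1)) • (⊤ : Submodule R (Ω[R⁄k])))),
      Function.Bijective f ∧
        ∀ x : ↥(IsLocalRing.maximalIdeal R),
          f (Submodule.Quotient.mk x) =
            Submodule.Quotient.mk (KaehlerDifferential.D k R (x : R)) := by
  classical
  set M := IsLocalRing.maximalIdeal R with hM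
  set N : Submodule R (Ω[R⁄k]) := (M ^ (n - 1)) • (⊤ : Submodule R (Ω[R⁄k])) with hN
  set S : Submodule R ↥M :=
    Submodule.comap M.subtype ((M ^ n : Ideal R) : Submodule R R) with hS
  let g : ↥M →ₗ[k] ((Ω[R⁄k]) ⧸ N) :=
    (N.mkQ.restrictScalars k).comp
      ((KaehlerDifferential.D k R).toLinearMap.comp (M.subtype.restrictScalars k))
  have hg : ∀ x : ↥M, g x = Submodule.Quotient.mk (KaehlerDifferential.D k R (x : R)) :=
    fun x => rfl
  have hle : S.restrictScalars k ≤ LinearMap.ker g := by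
    intro x hx
    have hx' : (x : R) ∈ M ^ n := hx
    rw [LinearMap.mem_ker, hg, Submodule.Quotient.mk_eq_zero]
    exact stmt7_aux_D_mem t ht hn hx'
  let e : (↥M ⧸ S) ≃ₗ[k] (↥M ⧸ S.restrictScalars k) :=
    (Submodule.Quotient.restrictScalarsEquiv k S).symm
  let f : (↥M ⧸ S) →ₗ[k] ((Ω[R⁄k]) ⧸ N) :=
    (Submodule.liftQ (S.restrictScalars k) g hle).comp e.toLinearMap
  have hf : ∀ x : ↥M, f (Submodule.Quotient.mk x) =
      Submodule.Quotient.mk (KaehlerDifferential.D k R (x : R)) := by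
    intro x
    have h1 : e (Submodule.Quotient.mk x) = Submodule.Quotient.mk x := by
      rw [LinearEquiv.symm_apply_eq, Submodule.Quotient.restrictScalarsEquiv_mk]
    simp only [f, LinearMap.comp_apply, LinearEquiv.coe_toLinearMap, h1,
      Submodule.liftQ_apply]
    exact hg x
  refine ⟨f, ⟨?_, ?_⟩, hf⟩
  · rw [← LinearMap.ker_eq_bot, LinearMap.ker_eq_bot']
    intro z hz
    obtain ⟨x, rfl⟩ := Submodule.Quotient.mk_surjective S z
    rw [hf, Submodule.Quotient.mk_eq_zero] at hz
    rw [Submodule.Quotient.mk_eq_zero]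
    exact stmt7_aux_inj hres.1 t ht b hb hn x.2 hz
  · intro y
    obtain ⟨ω, rfl⟩ := Submodule.Quotient.mk_surjective N y
    set a : R := b.repr ω () with ha
    obtain ⟨x, hx, r, hr, hDx⟩ := stmt7_aux_surj hres.2 t ht (n - 1) a
    refine ⟨Submodule.Quotient.mk ⟨x, hx⟩, ?_⟩
    rw [hf, Submodule.Quotient.eq]
    have hω : ω = a • KaehlerDifferential.D k R t := by
      rw [ha, ← hb, stmt7_aux_repr]
    have key : KaehlerDifferential.D k R x - ω = -(r • KaehlerDifferential.D k R t) := by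
      rw [hDx, sub_smul]
      rw [show ω = a • KaehlerDifferential.D k R t from hω]
      abel
    rw [key]
    exact Submodule.neg_mem _ (Submodule.smul_mem_smul hr Submodule.mem_top)
end

section
/- Let K be a field. Let 𝒟₁, 𝒟₂ be quivers; let 𝒫₁, 𝒫₂, 𝒜₁, 𝒜₂ be K-linear abelian categories; let T₁ : 𝒟₁ → 𝒫₁ and T₂ : 𝒟₂ → 𝒫₂ be representations (prefunctors); let F₁ : 𝒜₁ → 𝒫₁ and F₂ : 𝒜₂ → 𝒫₂ be K-linear faithful exact functors; let R₁ : 𝒟₁ → 𝒜₁ and R₂ : 𝒟₂ → 𝒜₂ be representations; and let α₁ : F₁∘R₁ ≅ T₁ and α₂ : F₂∘R₂ ≅ T₂ be invertible morphisms of representations. Assume that every object of 𝒜₁ is a subquotient of a finite direct sum of objects of the form R₁(p), with p a vertex of 𝒟₁. Let D₁, D₂ : 𝒟₁ → 𝒟₂ be morphisms of quivers, let Φ₁, Φ₂ : 𝒫₁ → 𝒫₂ be exact K-linear functors equipped with invertible morphisms of representations φᵢ : Φᵢ∘T₁ ≅ T₂∘Dᵢ (i = 1, 2), and let Ψ₁,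 Ψ₂ : 𝒜₁ → 𝒜₂ be exact functors equipped with invertible natural transformations ρᵢ : Φᵢ∘F₁ ≅ F₂∘Ψᵢ and invertible morphisms of representations ϱᵢ : Ψᵢ∘R₁ ≅ R₂∘Dᵢ such that, for each i and each vertex p of 𝒟₁, the composite (α₂)_{Dᵢ(p)} ∘ F₂((ϱᵢ)_p) ∘ (ρᵢ)_{R₁(p)} equals (φᵢ)_p ∘ Φᵢ((α₁)_p). Suppose given a natural transformation θ : Φ₁ → Φ₂ and a family θ_D of edges θ_{D,p} : D₁(p) → D₂(p) in 𝒟₂, indexed by the vertices p of 𝒟₁, such that for every vertex p one has T₂(θ_{D,p}) ∘ (φ₁)_p = (φ₂)_p ∘ θ_{T₁(p)}. Then there exists a unique natural transformation θ̄ : Ψ₁ → Ψ₂ such that, for every vertex p of 𝒟₁, R₂(θ_{D,p}) ∘ (ϱ₁)_p = (ϱ₂)_p ∘ θ̄_{R₁(p)}, and, for every object A of 𝒜₁, F₂(θ̄_A) ∘ (ρ₁)_A = (ρ₂)_A ∘ θ_{F₁(A)}. -/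
open CategoryTheory Limits

attribute [local instance] CategoryTheory.Limits.HasFiniteBiproducts.of_hasFiniteProducts

/-- lifting of natural transformations to universal (Nori-type) categories. -/
theorem stmt_9 (K : Type*) [Field K]
    (D₁ : Type*) [Quiver D₁] (D₂ : Type*) [Quiver D₂]
    (P₁ : Type*) [Category P₁] [Abelian P₁] [Linear K P₁]
    (P₂ : Type*) [Category P₂] [Abelian P₂] [Linear K P₂]
    (A₁ : Type*) [Category A₁] [Abelian A₁] [Linear K A₁]
    (A₂ : Type*) [Category A₂] [Abelian A₂] [Linear K A₂]
    (T₁ : D₁ ⥤q P₁) (T₂ : D₂ ⥤q P₂)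
    (F₁ : A₁ ⥤ P₁) [F₁.Additive] [F₁.Linear K] [F₁.Faithful]
      [PreservesFiniteLimits F₁] [PreservesFiniteColimits F₁]
    (F₂ : A₂ ⥤ P₂) [F₂.Additive] [F₂.Linear K] [F₂.Faithful]
      [PreservesFiniteLimits F₂] [PreservesFiniteColimits F₂]
    (R₁ : D₁ ⥤q A₁) (R₂ : D₂ ⥤q A₂)
    (α₁ : ∀ p : D₁, F₁.obj (R₁.obj p) ≅ T₁.obj p)
    (hα₁ : ∀ {p q : D₁} (e : p ⟶ q),
      F₁.map (R₁.map e) ≫ (α₁ q).hom = (α₁ p).hom ≫ T₁.map e)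
    (α₂ : ∀ p : D₂, F₂.obj (R₂.obj p) ≅ T₂.obj p)
    (hα₂ : ∀ {p q : D₂} (e : p ⟶ q),
      F₂.map (R₂.map e) ≫ (α₂ q).hom = (α₂ p).hom ≫ T₂.map e)
    (hgen : ∀ X : A₁, ∃ (n : ℕ) (p : Fin n → D₁) (S : A₁)
      (i : S ⟶ ⨁ fun j => R₁.obj (p j)) (q : S ⟶ X), Mono i ∧ Epi q)
    (Df₁ Df₂ : D₁ ⥤q D₂)
    (Φ₁ : P₁ ⥤ P₂) [Φ₁.Additive] [Φ₁.Linear K]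
      [PreservesFiniteLimits Φ₁] [PreservesFiniteColimits Φ₁]
    (Φ₂ : P₁ ⥤ P₂) [Φ₂.Additive] [Φ₂.Linear K]
      [PreservesFiniteLimits Φ₂] [PreservesFiniteColimits Φ₂]
    (φ₁ : ∀ p : D₁, Φ₁.obj (T₁.obj p) ≅ T₂.obj (Df₁.obj p))
    (hφ₁ : ∀ {p q : D₁} (e : p ⟶ q),
      Φ₁.map (T₁.map e) ≫ (φ₁ q).hom = (φ₁ p).hom ≫ T₂.map (Df₁.map e))
    (φ₂ : ∀ p : D₁, Φ₂.obj (T₁.obj p) ≅ T₂.obj (Df₂.obj p))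
    (hφ₂ : ∀ {p q : D₁} (e : p ⟶ q),
      Φ₂.map (T₁.map e) ≫ (φ₂ q).hom = (φ₂ p).hom ≫ T₂.map (Df₂.map e))
    (Ψ₁ : A₁ ⥤ A₂) [PreservesFiniteLimits Ψ₁] [PreservesFiniteColimits Ψ₁]
    (Ψ₂ : A₁ ⥤ A₂) [PreservesFiniteLimits Ψ₂] [PreservesFiniteColimits Ψ₂]
    (ρ₁ : F₁ ⋙ Φ₁ ≅ Ψ₁ ⋙ F₂) (ρ₂ : F₁ ⋙ Φ₂ ≅ Ψ₂ ⋙ F₂)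
    (ϱ₁ : ∀ p : D₁, Ψ₁.obj (R₁.obj p) ≅ R₂.obj (Df₁.obj p))
    (hϱ₁ : ∀ {p q : D₁} (e : p ⟶ q),
      Ψ₁.map (R₁.map e) ≫ (ϱ₁ q).hom = (ϱ₁ p).hom ≫ R₂.map (Df₁.map e))
    (ϱ₂ : ∀ p : D₁, Ψ₂.obj (R₁.obj p) ≅ R₂.obj (Df₂.obj p))
    (hϱ₂ : ∀ {p q : D₁} (e : p ⟶ q),
      Ψ₂.map (R₁.map e) ≫ (ϱ₂ q).hom = (ϱ₂ p).hom ≫ R₂.map (Df₂.map e))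
    (hcomp₁ : ∀ p : D₁,
      ρ₁.hom.app (R₁.obj p) ≫ F₂.map ((ϱ₁ p).hom) ≫ (α₂ (Df₁.obj p)).hom
        = Φ₁.map ((α₁ p).hom) ≫ (φ₁ p).hom)
    (hcomp₂ : ∀ p : D₁,
      ρ₂.hom.app (R₁.obj p) ≫ F₂.map ((ϱ₂ p).hom) ≫ (α₂ (Df₂.obj p)).hom
        = Φ₂.map ((α₁ p).hom) ≫ (φ₂ p).hom)
    (θ : Φ₁ ⟶ Φ₂) (θD : ∀ p : D₁, (Df₁.obj p ⟶ Df₂.obj p))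
    (hθ : ∀ p : D₁,
      (φ₁ p).hom ≫ T₂.map (θD p) = θ.app (T₁.obj p) ≫ (φ₂ p).hom) :
    ∃! θb : Ψ₁ ⟶ Ψ₂,
      (∀ p : D₁, (ϱ₁ p).hom ≫ R₂.map (θD p) = θb.app (R₁.obj p) ≫ (ϱ₂ p).hom) ∧
      (∀ A : A₁, ρ₁.hom.app A ≫ F₂.map (θb.app A) = θ.app (F₁.obj A) ≫ ρ₂.hom.app A) := by

  have hΨ₁ : Ψ₁.Additive := Ψ₁.additive_of_preserves_binary_products
  have hΨ₂ : Ψ₂.Additive := Ψ₂.additive_of_preserves_binary_products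
  -- the candidate morphism at the level of P₂
  let c : ∀ A : A₁, F₂.obj (Ψ₁.obj A) ⟶ F₂.obj (Ψ₂.obj A) :=
    fun A => ρ₁.inv.app A ≫ θ.app (F₁.obj A) ≫ ρ₂.hom.app A
  have cnat : ∀ {A B : A₁} (f : A ⟶ B),
      F₂.map (Ψ₁.map f) ≫ c B = c A ≫ F₂.map (Ψ₂.map f) := by
    intro A B f
    have h1 := ρ₁.inv.naturality f
    have h2 := θ.naturality (F₁.map f)
    have h3 := ρ₂.hom.naturality f
    simp only [Functor.comp_map] at h1 h2 h3
    simp only [c, ← Category.assoc, h1]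
    simp only [Category.assoc, ← h3]
    simp only [← Category.assoc, h2]
  -- the lift on objects of the form R₁ p
  let ℓR : ∀ p : D₁, Ψ₁.obj (R₁.obj p) ⟶ Ψ₂.obj (R₁.obj p) :=
    fun p => (ϱ₁ p).hom ≫ R₂.map (θD p) ≫ (ϱ₂ p).inv
  have hℓR : ∀ p : D₁, F₂.map (ℓR p) = c (R₁.obj p) := by
    intro p
    have main : ρ₁.hom.app (R₁.obj p) ≫ F₂.map (ℓR p) ≫
        F₂.map (ϱ₂ p).hom ≫ (α₂ (Df₂.obj p)).hom
        = ρ₁.hom.app (R₁.obj p) ≫ c (R₁.obj p) ≫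
          F₂.map (ϱ₂ p).hom ≫ (α₂ (Df₂.obj p)).hom := by
      calc ρ₁.hom.app (R₁.obj p) ≫ F₂.map (ℓR p) ≫
            F₂.map (ϱ₂ p).hom ≫ (α₂ (Df₂.obj p)).hom
          = ρ₁.hom.app (R₁.obj p) ≫ F₂.map ((ϱ₁ p).hom) ≫
            F₂.map (R₂.map (θD p)) ≫ (α₂ (Df₂.obj p)).hom := by
            simp only [ℓR, F₂.map_comp, Category.assoc]
            rw [← F₂.map_comp_assoc ((ϱ₂ p).inv) ((ϱ₂ p).hom), Iso.inv_hom_id,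
              F₂.map_id, Category.id_comp]
        _ = ρ₁.hom.app (R₁.obj p) ≫ F₂.map ((ϱ₁ p).hom) ≫
            (α₂ (Df₁.obj p)).hom ≫ T₂.map (θD p) := by rw [hα₂ (θD p)]
        _ = (ρ₁.hom.app (R₁.obj p) ≫ F₂.map ((ϱ₁ p).hom) ≫
            (α₂ (Df₁.obj p)).hom) ≫ T₂.map (θD p) := by simp only [Category.assoc]
        _ = (Φ₁.map ((α₁ p).hom) ≫ (φ₁ p).hom) ≫ T₂.map (θD p) := by rw [hcomp₁ p]
        _ = Φ₁.map ((α₁ p).hom) ≫ θ.app (T₁.obj p) ≫ (φ₂ p).hom := by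
            rw [Category.assoc, hθ p]
        _ = θ.app (F₁.obj (R₁.obj p)) ≫ Φ₂.map ((α₁ p).hom) ≫ (φ₂ p).hom := by
            rw [← Category.assoc, θ.naturality, Category.assoc]
        _ = θ.app (F₁.obj (R₁.obj p)) ≫ ρ₂.hom.app (R₁.obj p) ≫
            F₂.map ((ϱ₂ p).hom) ≫ (α₂ (Df₂.obj p)).hom := by rw [← hcomp₂ p]
        _ = ρ₁.hom.app (R₁.obj p) ≫ c (R₁.obj p) ≫
            F₂.map (ϱ₂ p).hom ≫ (α₂ (Df₂.obj p)).hom := by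
            simp [c]
    rw [cancel_epi (ρ₁.hom.app (R₁.obj p))] at main
    rw [← Category.assoc, ← Category.assoc, cancel_mono, cancel_mono] at main
    exact main
  -- existence of lifts for every object of A₁
  have key : ∀ A : A₁, ∃ ℓ : Ψ₁.obj A ⟶ Ψ₂.obj A, F₂.map ℓ = c A := by
    intro A
    obtain ⟨n, p, S, i, q, hi, hq⟩ := hgen A
    haveI := hi; haveI := hq
    -- the lift on the biproduct
    let ℓB : Ψ₁.obj (⨁ fun j => R₁.obj (p j)) ⟶ Ψ₂.obj (⨁ fun j => R₁.obj (p j)) :=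
      ∑ j : Fin n, Ψ₁.map (biproduct.π (fun j => R₁.obj (p j)) j) ≫ ℓR (p j) ≫
        Ψ₂.map (biproduct.ι (fun j => R₁.obj (p j)) j)
    have hB : F₂.map ℓB = c (⨁ fun j => R₁.obj (p j)) := by
      have : F₂.map ℓB = ∑ j : Fin n,
          F₂.map (Ψ₁.map (biproduct.π (fun j => R₁.obj (p j)) j)) ≫ F₂.map (ℓR (p j)) ≫
            F₂.map (Ψ₂.map (biproduct.ι (fun j => R₁.obj (p j)) j)) := by
        simp [ℓB, F₂.map_sum]
      rw [this]
      have e : ∀ j : Fin n,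
          F₂.map (Ψ₁.map (biproduct.π (fun j => R₁.obj (p j)) j)) ≫ F₂.map (ℓR (p j)) ≫
            F₂.map (Ψ₂.map (biproduct.ι (fun j => R₁.obj (p j)) j))
          = c (⨁ fun j => R₁.obj (p j)) ≫
            F₂.map (Ψ₂.map (biproduct.π (fun j => R₁.obj (p j)) j ≫
              biproduct.ι (fun j => R₁.obj (p j)) j)) := by
        intro j
        rw [hℓR, ← Category.assoc, cnat (biproduct.π _ j)]
        simp
      rw [Finset.sum_congr rfl (fun j _ => e j)]
      rw [← Preadditive.comp_sum, ← Functor.map_sum, ← Functor.map_sum, biproduct.total]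
      simp
    -- descend along the mono i
    haveI : Mono (Ψ₂.map i) := inferInstance
    have hz : (Ψ₁.map i ≫ ℓB) ≫ cokernel.π (Ψ₂.map i) = 0 := by
      apply F₂.map_injective
      rw [F₂.map_comp, F₂.map_comp, hB]
      rw [cnat i]
      rw [Category.assoc, ← F₂.map_comp, cokernel.condition]
      simp
    let ℓS : Ψ₁.obj S ⟶ Ψ₂.obj S :=
      Abelian.monoLift (Ψ₂.map i) (Ψ₁.map i ≫ ℓB) hz
    have hℓS : ℓS ≫ Ψ₂.map i = Ψ₁.map i ≫ ℓB :=
      Abelian.monoLift_comp _ _ _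
    have hS : F₂.map ℓS = c S := by
      haveI : Mono (F₂.map (Ψ₂.map i)) := inferInstance
      rw [← cancel_mono (F₂.map (Ψ₂.map i)), ← F₂.map_comp, hℓS, F₂.map_comp, hB,
        cnat i]
    -- descend along the epi q
    haveI : Epi (Ψ₁.map q) := inferInstance
    have hz2 : kernel.ι (Ψ₁.map q) ≫ (ℓS ≫ Ψ₂.map q) = 0 := by
      apply F₂.map_injective
      have hcq := cnat q
      rw [F₂.map_comp, F₂.map_comp, hS]
      simp only [c, Category.assoc] at hcq ⊢
      rw [← hcq, ← Category.assoc, ← F₂.map_comp, kernel.condition]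
      simp
    refine ⟨Abelian.epiDesc (Ψ₁.map q) (ℓS ≫ Ψ₂.map q) hz2, ?_⟩
    have hd : Ψ₁.map q ≫ Abelian.epiDesc (Ψ₁.map q) (ℓS ≫ Ψ₂.map q) hz2
        = ℓS ≫ Ψ₂.map q := Abelian.comp_epiDesc _ _ _
    haveI : Epi (F₂.map (Ψ₁.map q)) := inferInstance
    rw [← cancel_epi (F₂.map (Ψ₁.map q)), ← F₂.map_comp, hd, F₂.map_comp, hS, cnat q]
  choose ℓ hℓ using key
  have hnat : ∀ {A B : A₁} (f : A ⟶ B), Ψ₁.map f ≫ ℓ B = ℓ A ≫ Ψ₂.map f := by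
    intro A B f
    apply F₂.map_injective
    rw [F₂.map_comp, F₂.map_comp, hℓ, hℓ, cnat f]
  refine ⟨⟨ℓ, fun {A B} f => hnat f⟩, ⟨?_, ?_⟩, ?_⟩
  · -- condition (1)
    intro p
    have : ℓ (R₁.obj p) = ℓR p := by
      apply F₂.map_injective
      rw [hℓ, hℓR]
    show (ϱ₁ p).hom ≫ R₂.map (θD p) = ℓ (R₁.obj p) ≫ (ϱ₂ p).hom
    rw [this]
    simp [ℓR]
  · -- condition (2)
    intro A
    show ρ₁.hom.app A ≫ F₂.map (ℓ A) = θ.app (F₁.obj A) ≫ ρ₂.hom.app A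
    rw [hℓ]
    simp [c]
  · -- uniqueness
    intro θb' ⟨h1, h2⟩
    ext A
    apply F₂.map_injective
    have : F₂.map (θb'.app A) = c A := by
      rw [← cancel_epi (ρ₁.hom.app A), h2 A]
      simp [c]
    rw [this]
    exact (hℓ A).symm
end

section
/- In the situation of the lifting proposition for natural transformations (same data and hypotheses: quivers 𝒟₁, 𝒟₂; K-linear abelian categories 𝒫₁, 𝒫₂, 𝒜₁, 𝒜₂; representations T₁, T₂, R₁, R₂ with isomorphisms α₁, α₂; F₁, F₂ faithful exact; every object of 𝒜₁ a subquotient of a finite direct sum of objects R₁(p); exact functors Φ₁, Φ₂, Ψ₁, Ψ₂ with compatible isomorphisms φᵢ, ρᵢ, ϱᵢ; θ : Φ₁ → Φ₂ and θ_D compatible with φ₁, φ₂; and θ̄ : Ψ₁ → Ψ₂ the unique lifted natural transformation satisfying R₂(θ_{D,p}) ∘ (ϱ₁)_p = (ϱ₂)_p ∘ θ̄_{R₁(p)} and F₂(θ̄_A) ∘ (ρ₁)_A = (ρ₂)_A ∘ θ_{F₁(A)}): if θ_P is a monomorphism for every object P of 𝒫₁, then θ̄_A is a monomorphism for every object A of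 𝒜₁; and if θ_P is an epimorphism for every object P of 𝒫₁, then θ̄_A is an epimorphism for every object A of 𝒜₁. -/
open CategoryTheory Limits

attribute [local instance] CategoryTheory.Limits.HasFiniteBiproducts.of_hasFiniteProducts

/-- the lifted natural transformation is a (mono/epi)morphism objectwise if the
original one is. -/
theorem stmt_10 (K : Type*) [Field K]
    (D₁ : Type*) [Quiver D₁] (D₂ : Type*) [Quiver D₂]
    (P₁ : Type*) [Category P₁] [Abelian P₁] [Linear K P₁]
    (P₂ : Type*) [Category P₂] [Abelian P₂] [Linear K P₂]
    (A₁ : Type*) [Category A₁] [Abelian A₁] [Linear K A₁]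
    (A₂ : Type*) [Category A₂] [Abelian A₂] [Linear K A₂]
    (T₁ : D₁ ⥤q P₁) (T₂ : D₂ ⥤q P₂)
    (F₁ : A₁ ⥤ P₁) [F₁.Additive] [F₁.Linear K] [F₁.Faithful]
      [PreservesFiniteLimits F₁] [PreservesFiniteColimits F₁]
    (F₂ : A₂ ⥤ P₂) [F₂.Additive] [F₂.Linear K] [F₂.Faithful]
      [PreservesFiniteLimits F₂] [PreservesFiniteColimits F₂]
    (R₁ : D₁ ⥤q A₁) (R₂ : D₂ ⥤q A₂)
    (α₁ : ∀ p : D₁, F₁.obj (R₁.obj p) ≅ T₁.obj p)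
    (hα₁ : ∀ {p q : D₁} (e : p ⟶ q),
      F₁.map (R₁.map e) ≫ (α₁ q).hom = (α₁ p).hom ≫ T₁.map e)
    (α₂ : ∀ p : D₂, F₂.obj (R₂.obj p) ≅ T₂.obj p)
    (hα₂ : ∀ {p q : D₂} (e : p ⟶ q),
      F₂.map (R₂.map e) ≫ (α₂ q).hom = (α₂ p).hom ≫ T₂.map e)
    (hgen : ∀ X : A₁, ∃ (n : ℕ) (p : Fin n → D₁) (S : A₁)
      (i : S ⟶ ⨁ fun j => R₁.obj (p j)) (q : S ⟶ X), Mono i ∧ Epi q)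
    (Df₁ Df₂ : D₁ ⥤q D₂)
    (Φ₁ : P₁ ⥤ P₂) [Φ₁.Additive] [Φ₁.Linear K]
      [PreservesFiniteLimits Φ₁] [PreservesFiniteColimits Φ₁]
    (Φ₂ : P₁ ⥤ P₂) [Φ₂.Additive] [Φ₂.Linear K]
      [PreservesFiniteLimits Φ₂] [PreservesFiniteColimits Φ₂]
    (φ₁ : ∀ p : D₁, Φ₁.obj (T₁.obj p) ≅ T₂.obj (Df₁.obj p))
    (hφ₁ : ∀ {p q : D₁} (e : p ⟶ q),
      Φ₁.map (T₁.map e) ≫ (φ₁ q).hom = (φ₁ p).hom ≫ T₂.map (Df₁.map e))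
    (φ₂ : ∀ p : D₁, Φ₂.obj (T₁.obj p) ≅ T₂.obj (Df₂.obj p))
    (hφ₂ : ∀ {p q : D₁} (e : p ⟶ q),
      Φ₂.map (T₁.map e) ≫ (φ₂ q).hom = (φ₂ p).hom ≫ T₂.map (Df₂.map e))
    (Ψ₁ : A₁ ⥤ A₂) [PreservesFiniteLimits Ψ₁] [PreservesFiniteColimits Ψ₁]
    (Ψ₂ : A₁ ⥤ A₂) [PreservesFiniteLimits Ψ₂] [PreservesFiniteColimits Ψ₂]
    (ρ₁ : F₁ ⋙ Φ₁ ≅ Ψ₁ ⋙ F₂) (ρ₂ : F₁ ⋙ Φ₂ ≅ Ψ₂ ⋙ F₂)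
    (ϱ₁ : ∀ p : D₁, Ψ₁.obj (R₁.obj p) ≅ R₂.obj (Df₁.obj p))
    (hϱ₁ : ∀ {p q : D₁} (e : p ⟶ q),
      Ψ₁.map (R₁.map e) ≫ (ϱ₁ q).hom = (ϱ₁ p).hom ≫ R₂.map (Df₁.map e))
    (ϱ₂ : ∀ p : D₁, Ψ₂.obj (R₁.obj p) ≅ R₂.obj (Df₂.obj p))
    (hϱ₂ : ∀ {p q : D₁} (e : p ⟶ q),
      Ψ₂.map (R₁.map e) ≫ (ϱ₂ q).hom = (ϱ₂ p).hom ≫ R₂.map (Df₂.map e))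
    (hcomp₁ : ∀ p : D₁,
      ρ₁.hom.app (R₁.obj p) ≫ F₂.map ((ϱ₁ p).hom) ≫ (α₂ (Df₁.obj p)).hom
        = Φ₁.map ((α₁ p).hom) ≫ (φ₁ p).hom)
    (hcomp₂ : ∀ p : D₁,
      ρ₂.hom.app (R₁.obj p) ≫ F₂.map ((ϱ₂ p).hom) ≫ (α₂ (Df₂.obj p)).hom
        = Φ₂.map ((α₁ p).hom) ≫ (φ₂ p).hom)
    (θ : Φ₁ ⟶ Φ₂) (θD : ∀ p : D₁, (Df₁.obj p ⟶ Df₂.obj p))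
    (hθ : ∀ p : D₁,
      (φ₁ p).hom ≫ T₂.map (θD p) = θ.app (T₁.obj p) ≫ (φ₂ p).hom)
    (θb : Ψ₁ ⟶ Ψ₂)
    (hθb₁ : ∀ p : D₁, (ϱ₁ p).hom ≫ R₂.map (θD p) = θb.app (R₁.obj p) ≫ (ϱ₂ p).hom)
    (hθb₂ : ∀ A : A₁,
      ρ₁.hom.app A ≫ F₂.map (θb.app A) = θ.app (F₁.obj A) ≫ ρ₂.hom.app A) :
    ((∀ P : P₁, Mono (θ.app P)) → ∀ A : A₁, Mono (θb.app A)) ∧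
    ((∀ P : P₁, Epi (θ.app P)) → ∀ A : A₁, Epi (θb.app A)) := by
  have key : ∀ A : A₁, F₂.map (θb.app A)
      = ρ₁.inv.app A ≫ θ.app (F₁.obj A) ≫ ρ₂.hom.app A := by
    intro A
    rw [← hθb₂ A]
    simp
  constructor
  · intro h A
    have hm : Mono (F₂.map (θb.app A)) := by
      rw [key A]
      have := h (F₁.obj A)
      infer_instance
    exact F₂.mono_of_mono_map hm
  · intro h A
    have he : Epi (F₂.map (θb.app A)) := by
      rw [key A]
      have := h (F₁.obj A)
      infer_instance
    exact F₂.epi_of_epi_map he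
end
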